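/- For any nontrivial graph G, st_id(G) ≤ δ(G) + 1, where δ(G) is the minimum degree of G. -/

import Mathlib

open SimpleGraph

/-- `S` is an independent dominating set of `G`. -/
def SimpleGraph.IsIndepDomSet {V : Type*} (G : SimpleGraph V) (S : Set V) : Prop :=
  (S.Pairwise fun u v => ¬ G.Adj u v) ∧ ∀ v ∉ S, ∃ u ∈ S, G.Adj v u

/-- The independent domination number `γᵢ(G)`. -/
noncomputable def indepDomNum (V : Type*) [Fintype V] (G : SimpleGraph V) : ℕ :=
  sInf {n | ∃ S : Finset V, G.IsIndepDomSet ↑S ∧ S.card = n}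

/-- The independent domination stability `st_id(G)`: the minimum number of
vertices whose removal changes the independent domination number. -/
noncomputable def idStability (V : Type*) [Fintype V] [DecidableEq V]
    (G : SimpleGraph V) : ℕ :=
  sInf {k | ∃ A : Finset V, A.card = k ∧ A.Nonempty ∧
    indepDomNum _ (G.induce (↑(Aᶜ) : Set V)) ≠ indepDomNum V G}


section Helpers

variable {W : Type*} [Fintype W]

/-- Every finite graph has an independent dominating set (a maximal independent set). -/
lemma exists_isIndepDomSet (G : SimpleGraph W) : ∃ S : Finset W, G.IsIndepDomSet ↑S := by
  classical
  set 𝒮 : Finset (Finset W) :=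
    Finset.univ.filter (fun S => ∀ u ∈ S, ∀ v ∈ S, u ≠ v → ¬ G.Adj u v) with h𝒮
  have hne : 𝒮.Nonempty := ⟨∅, by simp [h𝒮]⟩
  obtain ⟨m, hm, hmax⟩ := 𝒮.exists_maximal hne
  have hmInd : ∀ u ∈ m, ∀ v ∈ m, u ≠ v → ¬ G.Adj u v := by
    simpa [h𝒮] using hm
  refine ⟨m, fun u hu v hv huv => hmInd u hu v hv huv, ?_⟩
  intro w hw
  by_contra h
  push_neg at h
  have hwm : w ∉ m := by simpa using hw
  have hmem : insert w m ∈ 𝒮 := by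
    simp only [h𝒮, Finset.mem_filter, Finset.mem_univ, true_and]
    intro a ha b hb hab
    rcases Finset.mem_insert.1 ha with ha' | ha'
    · subst ha'
      rcases Finset.mem_insert.1 hb with hb' | hb'
      · exact absurd hb'.symm hab
      · exact fun hadj => h b (by exact_mod_cast hb') hadj
    · rcases Finset.mem_insert.1 hb with hb' | hb'
      · subst hb'
        exact fun hadj => h a (by exact_mod_cast ha') (G.adj_symm hadj)
      · exact hmInd a ha' b hb' hab
  exact absurd (hmax hmem (Finset.subset_insert _ _)) (not_le_of_gt (Finset.ssubset_insert hwm))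

lemma indepDomNum_exists (G : SimpleGraph W) :
    ∃ S : Finset W, G.IsIndepDomSet ↑S ∧ S.card = indepDomNum W G := by
  have hne : {n | ∃ S : Finset W, G.IsIndepDomSet ↑S ∧ S.card = n}.Nonempty := by
    obtain ⟨S, hS⟩ := exists_isIndepDomSet G
    exact ⟨S.card, S, hS, rfl⟩
  exact Nat.sInf_mem hne

lemma one_le_indepDomNum [Nonempty W] (G : SimpleGraph W) : 1 ≤ indepDomNum W G := by
  obtain ⟨S, ⟨_, hdom⟩, hcard⟩ := indepDomNum_exists G
  rcases Nat.eq_zero_or_pos (indepDomNum W G) with h0 | h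
  · exfalso
    rw [h0] at hcard
    have hS : S = ∅ := Finset.card_eq_zero.mp hcard
    obtain ⟨v⟩ := ‹Nonempty W›
    obtain ⟨u, hu, _⟩ := hdom v (by simp [hS])
    simp [hS] at hu
  · exact h

end Helpers

section Transfer

variable {V : Type*} [Fintype V] [DecidableEq V] (G : SimpleGraph V)

/-- Upper bound for the induced graph's independent domination number from a
vertex-level witness. -/
lemma induce_indepDomNum_le (A : Finset V) (T : Finset V)
    (hTA : ∀ x ∈ T, x ∉ A)
    (hind : (↑T : Set V).Pairwise fun u v => ¬ G.Adj u v)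
    (hdom : ∀ w, w ∉ A → w ∉ T → ∃ u ∈ T, G.Adj w u) :
    indepDomNum _ (G.induce (↑(Aᶜ) : Set V)) ≤ T.card := by
  classical
  apply Nat.sInf_le
  refine ⟨T.subtype (fun x => x ∈ (↑(Aᶜ) : Set V)), ⟨?_, ?_⟩, ?_⟩
  · rintro ⟨u, hu⟩ hus ⟨v, hv⟩ hvs hne hadj
    have huT : u ∈ T := by simpa using hus
    have hvT : v ∈ T := by simpa using hvs
    have huv : u ≠ v := fun h => hne (Subtype.ext h)
    exact hind (by exact_mod_cast huT) (by exact_mod_cast hvT) huv hadj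
  · rintro ⟨w, hw⟩ hwS
    have hwA : w ∉ A := by simpa using hw
    have hwT : w ∉ T := by
      intro hwT
      exact hwS (by simpa using hwT)
    obtain ⟨u, huT, hadj⟩ := hdom w hwA hwT
    have huA : u ∈ (↑(Aᶜ) : Set V) := by simpa using hTA u huT
    exact ⟨⟨u, huA⟩, by simpa using huT, by simpa using hadj⟩
  · rw [Finset.card_subtype, Finset.filter_true_of_mem]
    intro x hx
    simpa using hTA x hx

/-- Extract a vertex-level witness from the induced graph's minimum
independent dominating set. -/
lemma induce_indepDomNum_exists (A : Finset V) :
    ∃ T : Finset V, (∀ x ∈ T, x ∉ A) ∧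
      ((↑T : Set V).Pairwise fun u v => ¬ G.Adj u v) ∧
      (∀ w, w ∉ A → w ∉ T → ∃ u ∈ T, G.Adj w u) ∧
      T.card = indepDomNum _ (G.induce (↑(Aᶜ) : Set V)) := by
  classical
  obtain ⟨S, ⟨hind, hdom⟩, hcard⟩ := indepDomNum_exists (G.induce (↑(Aᶜ) : Set V))
  refine ⟨S.image Subtype.val, ?_, ?_, ?_, ?_⟩
  · intro x hx
    obtain ⟨⟨y, hy⟩, _, rfl⟩ := Finset.mem_image.1 hx
    simpa using hy
  · rintro u hu v hv huv
    obtain ⟨⟨u', hu'⟩, huS, rfl⟩ := Finset.mem_image.1 (by exact_mod_cast hu)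
    obtain ⟨⟨v', hv'⟩, hvS, rfl⟩ := Finset.mem_image.1 (by exact_mod_cast hv)
    have hne : (⟨u', hu'⟩ : (↑(Aᶜ) : Set V)) ≠ ⟨v', hv'⟩ := by
      intro h; exact huv (congrArg Subtype.val h)
    exact hind (by exact_mod_cast huS) (by exact_mod_cast hvS) hne
  · intro w hwA hwT
    have hw : w ∈ (↑(Aᶜ) : Set V) := by simpa using hwA
    have hws : (⟨w, hw⟩ : (↑(Aᶜ) : Set V)) ∉ (↑S : Set _) := by
      intro hmem
      exact hwT (Finset.mem_image.2 ⟨⟨w, hw⟩, by exact_mod_cast hmem, rfl⟩)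
    obtain ⟨u, huS, hadj⟩ := hdom _ hws
    exact ⟨↑u, Finset.mem_image.2 ⟨u, by exact_mod_cast huS, rfl⟩, by simpa using hadj⟩
  · rw [Finset.card_image_of_injective _ Subtype.val_injective]
    exact hcard

end Transfer

/-- For any nontrivial graph `G`, `st_id(G) ≤ δ(G) + 1`. -/
theorem stmt10 {V : Type*} [Fintype V] [DecidableEq V] [Nonempty V]
    (G : SimpleGraph V) [DecidableRel G.Adj] :
    idStability V G ≤ G.minDegree + 1 := by
  classical
  obtain ⟨v, hv⟩ := G.exists_minimal_degree_vertex
  set Nc : Finset V := insert v (G.neighborFinset v) with hNc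
  have hvnb : v ∉ G.neighborFinset v := by simp
  have hvNc : v ∈ Nc := Finset.mem_insert_self _ _
  have hNccard : Nc.card = G.degree v + 1 := by
    rw [hNc, Finset.card_insert_of_notMem hvnb, G.card_neighborFinset_eq_degree]
  set n : ℕ := indepDomNum V G with hn
  set n' : ℕ := indepDomNum _ (G.induce (↑(Ncᶜ) : Set V)) with hn'
  by_cases h : n' = n
  · -- removing the closed neighborhood does not change γᵢ
    by_cases hd : G.degree v = 0
    · -- v is isolated: deduce a contradiction with h
      exfalso
      have hnb : G.neighborFinset v = ∅ := by
        apply Finset.card_eq_zero.mp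
        rw [G.card_neighborFinset_eq_degree]
        exact hd
      obtain ⟨S, ⟨hSind, hSdom⟩, hScard⟩ := indepDomNum_exists G
      have hvS : v ∈ S := by
        by_contra hvS
        obtain ⟨u, huS, hadj⟩ := hSdom v (by simpa using hvS)
        have hu : u ∈ G.neighborFinset v := (G.mem_neighborFinset _ _).2 hadj
        rw [hnb] at hu
        exact Finset.notMem_empty u hu
      have hle : n' ≤ (S.erase v).card := by
        apply induce_indepDomNum_le G Nc (S.erase v)
        · intro x hx
          intro hxNc
          rw [hNc, hnb] at hxNc
          have hxv : x = v := by simpa using hxNc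
          exact (Finset.mem_erase.1 hx).1 hxv
        · exact hSind.mono (by exact_mod_cast Finset.erase_subset v S)
        · intro w hwNc hwE
          have hwv : w ≠ v := fun hwv => hwNc (hwv ▸ hvNc)
          have hwS : w ∉ S := fun hwS => hwE (Finset.mem_erase.2 ⟨hwv, hwS⟩)
          obtain ⟨u, huS, hadj⟩ := hSdom w (by simpa using hwS)
          have huv : u ≠ v := by
            intro hue
            apply Finset.notMem_empty w
            rw [← hnb]
            exact (G.mem_neighborFinset _ _).2 (G.adj_symm (hue ▸ hadj))
          exact ⟨u, Finset.mem_erase.2 ⟨huv, by exact_mod_cast huS⟩, hadj⟩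
      have h1 : 1 ≤ n := one_le_indepDomNum G
      have hcard : (S.erase v).card = n - 1 := by
        rw [Finset.card_erase_of_mem hvS, hScard]
      omega
    · -- δ ≥ 1: remove the open neighborhood instead
      set A : Finset V := G.neighborFinset v with hA
      have hAcard : A.card = G.degree v := G.card_neighborFinset_eq_degree v
      have hAne : A.Nonempty := by
        rw [← Finset.card_pos, hAcard]
        omega
      obtain ⟨T, hTA, hTind, hTdom, hTcard⟩ := induce_indepDomNum_exists G A
      have hvA : v ∉ A := hvnb
      have hvT : v ∈ T := by
        by_contra hvT
        obtain ⟨u, huT, hadj⟩ := hTdom v hvA hvT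
        exact hTA u huT ((G.mem_neighborFinset _ _).2 hadj)
      have hle : n' ≤ (T.erase v).card := by
        apply induce_indepDomNum_le G Nc (T.erase v)
        · intro x hx
          obtain ⟨hxv, hxT⟩ := Finset.mem_erase.1 hx
          intro hxNc
          rcases Finset.mem_insert.1 (hNc ▸ hxNc) with h' | h'
          · exact hxv h'
          · exact hTA x hxT h'
        · exact hTind.mono (by exact_mod_cast Finset.erase_subset v T)
        · intro w hwNc hwE
          have hwv : w ≠ v := fun hwv => hwNc (hwv ▸ hvNc)
          have hwA : w ∉ A := fun hwA => hwNc (Finset.mem_insert_of_mem hwA)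
          have hwT : w ∉ T := fun hwT => hwE (Finset.mem_erase.2 ⟨hwv, hwT⟩)
          obtain ⟨u, huT, hadj⟩ := hTdom w hwA hwT
          have huv : u ≠ v := by
            intro huv
            exact hwA ((G.mem_neighborFinset _ _).2 (G.adj_symm (huv ▸ hadj)))
          exact ⟨u, Finset.mem_erase.2 ⟨huv, huT⟩, hadj⟩
      have hT1 : 1 ≤ T.card := Finset.card_pos.2 ⟨v, hvT⟩
      have hEcard : (T.erase v).card = T.card - 1 := Finset.card_erase_of_mem hvT
      have hAne' : indepDomNum _ (G.induce (↑(Aᶜ) : Set V)) ≠ n := by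
        rw [← hTcard]
        omega
      have hmem : A.card ∈ {k | ∃ B : Finset V, B.card = k ∧ B.Nonempty ∧
          indepDomNum _ (G.induce (↑(Bᶜ) : Set V)) ≠ indepDomNum V G} :=
        ⟨A, rfl, hAne, hAne'⟩
      calc idStability V G ≤ A.card := Nat.sInf_le hmem
        _ ≤ G.minDegree + 1 := by rw [hAcard, hv]; omega
  · -- removing the closed neighborhood changes γᵢ
    have hmem : Nc.card ∈ {k | ∃ B : Finset V, B.card = k ∧ B.Nonempty ∧
        indepDomNum _ (G.induce (↑(Bᶜ) : Set V)) ≠ indepDomNum V G} :=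
      ⟨Nc, rfl, ⟨v, hvNc⟩, h⟩
    calc idStability V G ≤ Nc.card := Nat.sInf_le hmem
      _ = G.minDegree + 1 := by rw [hNccard, hv]
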